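/- arXiv:1409.3581 — 4 statements merged into one kernel-verified Lean document; each statement's English description precedes it below -/
import Mathlib

section
/- Let μ > 0, c_CH > 0, F_T > 0 and R_eq = 2π c_CH / F_T. For every initial radius R₀ > 0 there exists a unique function R : [0,∞) → ℝ with R(0) = R₀ that is differentiable and satisfies R'(t) = (c_CH/(4μ))·(1/R(t) − 1/R_eq) for all t ≥ 0; moreover this solution satisfies min(R₀, R_eq) ≤ R(t) ≤ max(R₀, R_eq) for all t ≥ 0 (in particular R(t) > 0 for all t, so the solution is global). -/
open Real Set Filter Topology Function

theorem tether_aux_inv (J : Set ℝ) (hJo : IsOpen J) (hJcv : Convex ℝ J)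
    (T φ : ℝ → ℝ) (hT : ∀ r ∈ J, HasDerivAt T (φ r) r) (hφ : ∀ r ∈ J, 0 < φ r)
    (r₀ : ℝ) (hr₀ : r₀ ∈ J) (hT0 : T r₀ = 0)
    (htop : ∀ M : ℝ, ∃ r ∈ J, M < T r) :
    ∃ g : ℝ → ℝ, g 0 = r₀ ∧
      ∀ t ≥ (0:ℝ), g t ∈ J ∧ r₀ ≤ g t ∧ HasDerivAt g (φ (g t))⁻¹ t := by
  have hcont : ContinuousOn T J := fun x hx => (hT x hx).continuousAt.continuousWithinAt
  have hmono : StrictMonoOn T J := by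
    apply strictMonoOn_of_deriv_pos hJcv hcont
    intro x hx
    rw [hJo.interior_eq] at hx
    rw [(hT x hx).deriv]
    exact hφ x hx
  set I := T '' J with hI
  have hIop : IsOpen I := by
    rw [isOpen_iff_mem_nhds]
    rintro t ⟨r, hr, rfl⟩
    obtain ⟨ε, hε, hball⟩ := Metric.isOpen_iff.1 hJo r hr
    have hsub : Icc (r - ε/2) (r + ε/2) ⊆ J := by
      intro x hx
      apply hball
      rw [Metric.mem_ball, Real.dist_eq, abs_lt]
      constructor <;> [linarith [hx.1]; linarith [hx.2]]
    have hl : r - ε/2 ∈ J := hsub ⟨le_refl _, by linarith⟩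
    have hrr : r + ε/2 ∈ J := hsub ⟨by linarith, le_refl _⟩
    have key : Icc (T (r - ε/2)) (T (r + ε/2)) ⊆ I := by
      refine (intermediate_value_Icc (by linarith) (hcont.mono hsub)).trans ?_
      exact image_mono hsub
    refine mem_of_superset (Ioo_mem_nhds ?_ ?_) (Ioo_subset_Icc_self.trans key)
    · exact hmono hl hr (by linarith)
    · exact hmono hr hrr (by linarith)
  have hIci : Ici (0:ℝ) ⊆ I := by
    intro t ht
    obtain ⟨r₁, hr₁J, hr₁⟩ := htop t
    have h01 : T r₀ < T r₁ := by rw [hT0]; exact lt_of_le_of_lt ht hr₁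
    have hrlt : r₀ < r₁ := (hmono.lt_iff_lt hr₀ hr₁J).1 h01
    have hsub : Icc r₀ r₁ ⊆ J := hJcv.ordConnected.out hr₀ hr₁J
    have : t ∈ Icc (T r₀) (T r₁) := ⟨by rw [hT0]; exact ht, le_of_lt hr₁⟩
    exact (image_mono hsub) (intermediate_value_Icc hrlt.le (hcont.mono hsub) this)
  set g := invFunOn T J with hg
  have hex : ∀ t ∈ I, ∃ a ∈ J, T a = t := by
    rintro t ⟨r, hr, rfl⟩; exact ⟨r, hr, rfl⟩
  have hgJ : ∀ t ∈ I, g t ∈ J := fun t ht => invFunOn_mem (hex t ht)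
  have hTg : ∀ t ∈ I, T (g t) = t := fun t ht => invFunOn_eq (hex t ht)
  have h0I : (0:ℝ) ∈ I := hIci (self_mem_Ici)
  have hg0 : g 0 = r₀ := by
    apply hmono.injOn (hgJ 0 h0I) hr₀
    rw [hTg 0 h0I, hT0]
  have hgmono : StrictMonoOn g I := by
    intro a ha b hb hab
    by_contra h
    push_neg at h
    have := (hmono.le_iff_le (hgJ b hb) (hgJ a ha)).2 h
    rw [hTg a ha, hTg b hb] at this
    exact absurd this (not_le.2 hab)
  have hgI : ∀ t ∈ I, ContinuousAt g t := by
    intro t ht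
    apply hgmono.continuousAt_of_image_mem_nhds (hIop.mem_nhds ht)
    refine mem_of_superset (hJo.mem_nhds (hgJ t ht)) ?_
    intro r hr
    refine ⟨T r, mem_image_of_mem T hr, ?_⟩
    exact hmono.injOn (hgJ _ (mem_image_of_mem T hr)) hr (hTg _ (mem_image_of_mem T hr))
  refine ⟨g, hg0, fun t ht => ?_⟩
  have htI : t ∈ I := hIci (mem_Ici.2 ht)
  refine ⟨hgJ t htI, ?_, ?_⟩
  · rcases eq_or_lt_of_le ht with h | h
    · rw [← h, hg0]
    · exact le_of_lt (hg0 ▸ hgmono h0I htI h)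
  · have hev : ∀ᶠ y in 𝓝 t, T (g y) = y := by
      filter_upwards [hIop.mem_nhds htI] with y hy
      exact hTg y hy
    exact HasDerivAt.of_local_left_inverse (hgI t htI) (hT _ (hgJ t htI)) (hφ _ (hgJ t htI)).ne' hev

theorem tether_aux_confine (k Req : ℝ) (hk : 0 < k) (hReq : 0 < Req)
    (R₀ : ℝ) (hR₀ : 0 < R₀) (S : ℝ → ℝ) (hS0 : S 0 = R₀)
    (hS : ∀ t ≥ (0:ℝ), HasDerivAt S (k * (1 / S t - 1 / Req)) t) :
    ∀ t ≥ (0:ℝ), min R₀ Req ≤ S t ∧ S t ≤ max R₀ Req := by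
  have hcont : ∀ a b : ℝ, 0 ≤ a → ContinuousOn S (Icc a b) := by
    intro a b ha x hx
    exact (hS x (le_trans ha hx.1)).continuousAt.continuousWithinAt
  intro t₀ ht₀
  set m := min R₀ Req with hm
  set M := max R₀ Req with hM
  have hm0 : 0 < m := lt_min hR₀ hReq
  have hmReq : m ≤ Req := min_le_right _ _
  have hReqM : Req ≤ M := le_max_right _ _
  constructor
  · -- lower bound
    by_contra h
    push_neg at h
    set A := {t | t ∈ Icc 0 t₀ ∧ m ≤ S t} with hA
    have hAcl : IsClosed A := (hcont 0 t₀ le_rfl).preimage_isClosed_of_isClosed isClosed_Icc isClosed_Ici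
    have hA0 : (0:ℝ) ∈ A := ⟨⟨le_refl _, ht₀⟩, by rw [hS0]; exact min_le_left _ _⟩
    have hAbdd : BddAbove A := ⟨t₀, fun x hx => hx.1.2⟩
    set t₂ := sSup A with ht₂
    have ht₂A : t₂ ∈ A := hAcl.csSup_mem ⟨0, hA0⟩ hAbdd
    have ht₂0 : 0 ≤ t₂ := ht₂A.1.1
    have ht₂t₀ : t₂ ≤ t₀ := ht₂A.1.2
    have hlt : ∀ x, t₂ < x → x ≤ t₀ → S x < m := by
      intro x hx1 hx2
      by_contra hx
      push_neg at hx
      exact absurd (le_csSup hAbdd ⟨⟨le_trans ht₂0 hx1.le, hx2⟩, hx⟩) (not_le.2 hx1)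
    -- pick c
    set c := (max (S t₀) 0 + m) / 2 with hc
    have hSt₀m : S t₀ < m := h
    have hmax : max (S t₀) 0 < m := max_lt h hm0
    have hc0 : 0 < c := by
      have : (0:ℝ) ≤ max (S t₀) 0 := le_max_right _ _
      simp only [hc]; linarith
    have hcm : c < m := by simp only [hc]; linarith
    have hSt₀c : S t₀ < c := by
      have : S t₀ ≤ max (S t₀) 0 := le_max_left _ _
      simp only [hc]; linarith
    set B := {t | t ∈ Icc t₂ t₀ ∧ S t ≤ c} with hB
    have hBcl : IsClosed B := (hcont t₂ t₀ ht₂0).preimage_isClosed_of_isClosed isClosed_Icc isClosed_Iic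
    have ht₀B : t₀ ∈ B := ⟨⟨ht₂t₀, le_refl _⟩, hSt₀c.le⟩
    have hBbdd : BddBelow B := ⟨t₂, fun x hx => hx.1.1⟩
    set t₃ := sInf B with ht₃
    have ht₃B : t₃ ∈ B := hBcl.csInf_mem ⟨t₀, ht₀B⟩ hBbdd
    have ht₂₃ : t₂ < t₃ := by
      rcases lt_or_eq_of_le ht₃B.1.1 with h' | h'
      · exact h'
      · exfalso
        have := ht₃B.2
        rw [← h'] at this
        exact absurd (lt_of_le_of_lt this hcm) (not_lt.2 ht₂A.2)
    have hmid : ∀ x ∈ Ioo t₂ t₃, c < S x ∧ S x < m := by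
      intro x hx
      constructor
      · by_contra hxc
        push_neg at hxc
        have hxB : x ∈ B := ⟨⟨hx.1.le, le_trans hx.2.le ht₃B.1.2⟩, hxc⟩
        exact absurd (csInf_le hBbdd hxB) (not_le.2 hx.2)
      · exact hlt x hx.1 (le_trans hx.2.le ht₃B.1.2)
    have hmono2 : MonotoneOn S (Icc t₂ t₃) := by
      apply monotoneOn_of_deriv_nonneg (convex_Icc _ _)
      · exact hcont t₂ t₃ ht₂0
      · intro x hx
        rw [interior_Icc] at hx
        exact (hS x (le_trans ht₂0 hx.1.le)).differentiableAt.differentiableWithinAt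
      · intro x hx
        rw [interior_Icc] at hx
        obtain ⟨hcx, hxm⟩ := hmid x hx
        have hx0 : (0:ℝ) ≤ x := le_trans ht₂0 hx.1.le
        rw [(hS x hx0).deriv]
        have hSx0 : 0 < S x := lt_trans hc0 hcx
        have : 1 / Req ≤ 1 / S x := by
          apply one_div_le_one_div_of_le hSx0
          linarith
        have : 0 ≤ 1 / S x - 1 / Req := by linarith
        positivity
    have := hmono2 ⟨le_refl _, ht₂₃.le⟩ ⟨ht₂₃.le, le_refl _⟩ ht₂₃.le
    have h1 : m ≤ S t₂ := ht₂A.2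
    have h2 : S t₃ ≤ c := ht₃B.2
    linarith
  · -- upper bound
    by_contra h
    push_neg at h
    set A := {t | t ∈ Icc 0 t₀ ∧ S t ≤ M} with hA
    have hAcl : IsClosed A := (hcont 0 t₀ le_rfl).preimage_isClosed_of_isClosed isClosed_Icc isClosed_Iic
    have hA0 : (0:ℝ) ∈ A := ⟨⟨le_refl _, ht₀⟩, by rw [hS0]; exact le_max_left _ _⟩
    have hAbdd : BddAbove A := ⟨t₀, fun x hx => hx.1.2⟩
    set t₂ := sSup A with ht₂
    have ht₂A : t₂ ∈ A := hAcl.csSup_mem ⟨0, hA0⟩ hAbdd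
    have ht₂0 : 0 ≤ t₂ := ht₂A.1.1
    have ht₂t₀ : t₂ ≤ t₀ := ht₂A.1.2
    have hgt : ∀ x, t₂ < x → x ≤ t₀ → M < S x := by
      intro x hx1 hx2
      by_contra hx
      push_neg at hx
      exact absurd (le_csSup hAbdd ⟨⟨le_trans ht₂0 hx1.le, hx2⟩, hx⟩) (not_le.2 hx1)
    have hanti : AntitoneOn S (Icc t₂ t₀) := by
      apply antitoneOn_of_deriv_nonpos (convex_Icc _ _)
      · exact hcont t₂ t₀ ht₂0
      · intro x hx
        rw [interior_Icc] at hx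
        exact (hS x (le_trans ht₂0 hx.1.le)).differentiableAt.differentiableWithinAt
      · intro x hx
        rw [interior_Icc] at hx
        have hMx : M < S x := hgt x hx.1 hx.2.le
        have hx0 : (0:ℝ) ≤ x := le_trans ht₂0 hx.1.le
        rw [(hS x hx0).deriv]
        have hSx0 : 0 < S x := lt_trans (lt_of_lt_of_le hReq hReqM) hMx
        have : 1 / S x ≤ 1 / Req := by
          apply one_div_le_one_div_of_le hReq
          linarith
        have h2 : 1 / S x - 1 / Req ≤ 0 := by linarith
        exact mul_nonpos_of_nonneg_of_nonpos hk.le h2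
    have := hanti ⟨le_refl _, ht₂t₀⟩ ⟨ht₂t₀, le_refl _⟩ ht₂t₀
    have h1 : S t₂ ≤ M := ht₂A.2
    linarith

theorem tether_aux_uniq (k Req : ℝ) (hk : 0 < k) (hReq : 0 < Req)
    (m M : ℝ) (hm : 0 < m)
    (R S : ℝ → ℝ)
    (hR : ∀ t ≥ (0:ℝ), HasDerivAt R (k * (1 / R t - 1 / Req)) t)
    (hS : ∀ t ≥ (0:ℝ), HasDerivAt S (k * (1 / S t - 1 / Req)) t)
    (hRmem : ∀ t ≥ (0:ℝ), R t ∈ Icc m M) (hSmem : ∀ t ≥ (0:ℝ), S t ∈ Icc m M)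
    (h0 : S 0 = R 0) : ∀ t ≥ (0:ℝ), S t = R t := by
  intro t₀ ht₀
  set v : ℝ → ℝ → ℝ := fun _ x => k * (1 / x - 1 / Req) with hv
  have hlip : ∀ t : ℝ, LipschitzOnWith (NNReal.mk (k / m ^ 2) (by positivity)) (v t) (Icc m M) := by
    intro t
    rw [lipschitzOnWith_iff_dist_le_mul]
    intro x hx y hy
    have hx0 : 0 < x := lt_of_lt_of_le hm hx.1
    have hy0 : 0 < y := lt_of_lt_of_le hm hy.1
    rw [Real.dist_eq, Real.dist_eq, NNReal.coe_mk]
    have hxy : v t x - v t y = k * (y - x) / (x * y) := by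
      simp only [hv]
      field_simp
      ring
    rw [hxy, abs_div, abs_mul, abs_of_pos hk, abs_of_pos (mul_pos hx0 hy0)]
    rw [div_le_iff₀ (mul_pos hx0 hy0)]
    have h1 : m ^ 2 ≤ x * y := by nlinarith [hx.1, hy.1]
    have h2 : |y - x| = |x - y| := abs_sub_comm _ _
    rw [h2]
    have h3 : 0 ≤ |x - y| := abs_nonneg _
    have h4 : k / m ^ 2 * |x - y| * (x * y) ≥ k / m ^ 2 * |x - y| * m ^ 2 :=
      mul_le_mul_of_nonneg_left h1 (by positivity)
    have h5 : k / m ^ 2 * |x - y| * m ^ 2 = k * |x - y| := by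
      field_simp
    linarith
  have key : EqOn S R (Icc 0 t₀) := by
    apply ODE_solution_unique_of_mem_Icc_right (v := v) (s := fun _ => Icc m M) (fun t _ => hlip t)
    · intro x hx
      exact (hS x hx.1).continuousAt.continuousWithinAt
    · intro x hx
      exact (hS x hx.1).hasDerivWithinAt
    · intro x hx
      exact hSmem x hx.1
    · intro x hx
      exact (hR x hx.1).continuousAt.continuousWithinAt
    · intro x hx
      exact (hR x hx.1).hasDerivWithinAt
    · intro x hx
      exact hRmem x hx.1
    · exact h0
  exact key ⟨ht₀, le_refl _⟩

/-- Global existence and uniqueness for the tether-radius ODE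
`R'(t) = (c_CH/(4μ))·(1/R(t) − 1/R_eq)` with `R_eq = 2π c_CH / F_T`:
for every initial radius `R₀ > 0` there is a unique differentiable solution on
`[0,∞)` with `R(0) = R₀`, and it stays between `min(R₀, R_eq)` and
`max(R₀, R_eq)` (in particular it is positive, hence global). -/
theorem tether_radius_ode_exists_unique
    (μ cCH FT : ℝ) (hμ : 0 < μ) (hc : 0 < cCH) (hF : 0 < FT)
    (Req : ℝ) (hReq : Req = 2 * π * cCH / FT)
    (R₀ : ℝ) (hR₀ : 0 < R₀) :
    ∃ R : ℝ → ℝ, R 0 = R₀ ∧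
      (∀ t ≥ (0 : ℝ), HasDerivAt R ((cCH / (4 * μ)) * (1 / R t - 1 / Req)) t) ∧
      (∀ t ≥ (0 : ℝ), min R₀ Req ≤ R t ∧ R t ≤ max R₀ Req) ∧
      (∀ S : ℝ → ℝ, S 0 = R₀ →
        (∀ t ≥ (0 : ℝ), HasDerivAt S ((cCH / (4 * μ)) * (1 / S t - 1 / Req)) t) →
        ∀ t ≥ (0 : ℝ), S t = R t) := by
  have hπ := Real.pi_pos
  have hReqpos : 0 < Req := by rw [hReq]; positivity
  set k := cCH / (4 * μ) with hkdef
  have hk : 0 < k := by positivity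
  set C := R₀ + Req * Real.log (Req - R₀) with hC
  obtain ⟨R, hR0, hRode⟩ :
      ∃ R : ℝ → ℝ, R 0 = R₀ ∧ ∀ t ≥ (0:ℝ), HasDerivAt R (k * (1 / R t - 1 / Req)) t := by
    rcases lt_trichotomy R₀ Req with hlt | heq | hgt
    · -- increasing case: J = Ioo 0 Req
      have hmain := tether_aux_inv (Ioo 0 Req) isOpen_Ioo (convex_Ioo _ _)
        (fun r => (Req / k) * (C - (r + Req * Real.log (Req - r))))
        (fun r => r * Req / (k * (Req - r)))
        (by
          intro r hr
          have hne : Req - r ≠ 0 := sub_ne_zero.2 (ne_of_gt hr.2)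
          have hlog : HasDerivAt (fun x : ℝ => Real.log (Req - x)) ((-1) / (Req - r)) r :=
            HasDerivAt.log ((hasDerivAt_id r).const_sub Req) hne
          have hin : HasDerivAt (fun x : ℝ => x + Req * Real.log (Req - x))
              (1 + Req * ((-1) / (Req - r))) r :=
            (hasDerivAt_id r).add (hlog.const_mul Req)
          have := (hin.const_sub C).const_mul (Req / k)
          refine this.congr_deriv ?_
          field_simp
          try ring)
        (by
          intro r hr
          exact div_pos (mul_pos hr.1 hReqpos) (mul_pos hk (sub_pos.2 hr.2)))
        R₀ ⟨hR₀, hlt⟩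
        (by simp [hC])
        (by
          intro M
          set X := max (1 - Real.log Req) ((k * M - Req * C + Req ^ 2) / Req ^ 2 + 1) with hX
          refine ⟨Req - Real.exp (-X), ⟨?_, ?_⟩, ?_⟩
          · have h1 : 1 - Real.log Req ≤ X := le_max_left _ _
            have : Real.exp (-X) < Real.exp (Real.log Req) :=
              Real.exp_lt_exp.2 (by linarith)
            rw [Real.exp_log hReqpos] at this
            linarith
          · have := Real.exp_pos (-X); linarith
          · have hlogr : Real.log (Req - (Req - Real.exp (-X))) = -X := by
              rw [show Req - (Req - Real.exp (-X)) = Real.exp (-X) by ring, Real.log_exp]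
            simp only [hlogr]
            have h2 : (k * M - Req * C + Req ^ 2) / Req ^ 2 + 1 ≤ X := le_max_right _ _
            have h3 : k * M - Req * C + Req ^ 2 ≤ (X - 1) * Req ^ 2 := by
              rw [← div_le_iff₀ (by positivity : (0:ℝ) < Req ^ 2)] at *
              linarith
            have hr2 : Req - Real.exp (-X) < Req := by
              have := Real.exp_pos (-X); linarith
            rw [div_mul_eq_mul_div, lt_div_iff₀ hk]
            nlinarith [mul_pos hReqpos (Real.exp_pos (-X))])
      obtain ⟨g, hg0, hg⟩ := hmain
      refine ⟨g, hg0, fun t ht => ?_⟩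
      obtain ⟨hgJ, _, hd⟩ := hg t ht
      convert hd using 1
      have h1 : g t ≠ 0 := ne_of_gt hgJ.1
      have h2 : Req - g t ≠ 0 := sub_ne_zero.2 (ne_of_gt hgJ.2)
      field_simp
      try ring
    · -- constant case
      refine ⟨fun _ => Req, heq ▸ rfl, fun t ht => ?_⟩
      have : k * (1 / Req - 1 / Req) = 0 := by rw [sub_self, mul_zero]
      rw [this]
      exact hasDerivAt_const t Req
    · -- decreasing case: negation trick, J = Iio (-Req)
      have hmain := tether_aux_inv (Iio (-Req)) isOpen_Iio (convex_Iio _)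
        (fun r => (Req / k) * (C - (-r + Req * Real.log (Req + r))))
        (fun r => r * Req / (k * (Req + r)))
        (by
          intro r hr
          have hne : Req + r ≠ 0 := by
            simp only [mem_Iio] at hr; intro h; nlinarith
          have hlog : HasDerivAt (fun x : ℝ => Real.log (Req + x)) (1 / (Req + r)) r :=
            HasDerivAt.log ((hasDerivAt_id r).const_add Req) hne
          have hin : HasDerivAt (fun x : ℝ => -x + Req * Real.log (Req + x))
              (-1 + Req * (1 / (Req + r))) r :=
            ((hasDerivAt_id r).neg).add (hlog.const_mul Req)
          have := (hin.const_sub C).const_mul (Req / k)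
          refine this.congr_deriv ?_
          field_simp
          try ring)
        (by
          intro r hr
          simp only [mem_Iio] at hr
          have h1 : r < 0 := by linarith
          have h2 : Req + r < 0 := by linarith
          rw [div_pos_iff]
          right
          constructor
          · nlinarith
          · nlinarith)
        (-R₀)
        (by simp only [mem_Iio]; linarith)
        (by
          have h1 : Req + -R₀ = Req - R₀ := by ring
          simp only [h1, neg_neg, hC]
          try ring_nf
          try simp [sub_self])
        (by
          intro M
          set X := max 0 ((k * M - Req * C + Req * (Req + 1)) / Req ^ 2 + 1) with hX
          refine ⟨-Req - Real.exp (-X), ?_, ?_⟩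
          · simp only [mem_Iio]
            have := Real.exp_pos (-X); linarith
          · have hlogr : Real.log (Req + (-Req - Real.exp (-X))) = -X := by
              rw [show Req + (-Req - Real.exp (-X)) = -Real.exp (-X) by ring,
                Real.log_neg_eq_log, Real.log_exp]
            simp only [hlogr]
            have hX0 : (0:ℝ) ≤ X := le_max_left _ _
            have hexp1 : Real.exp (-X) ≤ 1 := Real.exp_le_one_iff.2 (by linarith)
            have h2 : (k * M - Req * C + Req * (Req + 1)) / Req ^ 2 + 1 ≤ X := le_max_right _ _
            have h3 : k * M - Req * C + Req * (Req + 1) ≤ (X - 1) * Req ^ 2 := by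
              rw [← div_le_iff₀ (by positivity : (0:ℝ) < Req ^ 2)] at *
              linarith
            rw [div_mul_eq_mul_div, lt_div_iff₀ hk]
            nlinarith [Real.exp_pos (-X)])
      obtain ⟨g, hg0, hg⟩ := hmain
      refine ⟨fun t => -(g t), by show -g 0 = R₀; rw [hg0, neg_neg], fun t ht => ?_⟩
      obtain ⟨hgJ, _, hd⟩ := hg t ht
      simp only [mem_Iio] at hgJ
      have hd2 := hd.neg
      refine hd2.congr_deriv ?_
      have h1 : g t ≠ 0 := by intro h; rw [h] at hgJ; linarith
      have h2 : Req + g t ≠ 0 := by intro h; nlinarith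
      field_simp [h1, h2]
      try ring
  have hbounds := tether_aux_confine k Req hk hReqpos R₀ hR₀ R hR0 hRode
  have hm0 : 0 < min R₀ Req := lt_min hR₀ hReqpos
  refine ⟨R, hR0, hRode, hbounds, ?_⟩
  intro S hS0 hSode t ht
  have hSb := tether_aux_confine k Req hk hReqpos R₀ hR₀ S hS0 hSode
  exact tether_aux_uniq k Req hk hReqpos (min R₀ Req) (max R₀ Req) hm0 R S hRode hSode
    (fun x hx => ⟨(hbounds x hx).1, (hbounds x hx).2⟩)
    (fun x hx => ⟨(hSb x hx).1, (hSb x hx).2⟩)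
    (by rw [hS0, hR0]) t ht
end

section
/- Let μ > 0, c_CH > 0, F_T > 0 and R_eq = 2π c_CH / F_T. Let R : [0,∞) → ℝ be differentiable with R(t) > 0 and R'(t) = (c_CH/(4μ))·(1/R(t) − 1/R_eq) for all t ≥ 0. Then R is monotone (nonincreasing if R(0) ≥ R_eq, nondecreasing if R(0) ≤ R_eq) and R(t) → R_eq as t → ∞; i.e. the cylinder radius tends to the equilibrium radius R_eq as t → ∞. -/
open Real Filter

private lemma monoAux {f f' : ℝ → ℝ}
    (hf : ∀ t ∈ Set.Ici (0:ℝ), HasDerivAt f (f' t) t)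
    (h0 : ∀ t ∈ Set.Ici (0:ℝ), 0 ≤ f' t) : MonotoneOn f (Set.Ici 0) := by
  apply monotoneOn_of_deriv_nonneg (convex_Ici 0)
  · exact fun t ht => (hf t ht).continuousAt.continuousWithinAt
  · intro t ht
    rw [interior_Ici] at ht
    exact (hf t (Set.mem_Ici.mpr (le_of_lt ht))).differentiableAt.differentiableWithinAt
  · intro t ht
    rw [interior_Ici] at ht
    rw [(hf t (Set.mem_Ici.mpr (le_of_lt ht))).deriv]
    exact h0 t (Set.mem_Ici.mpr (le_of_lt ht))

private lemma antiAux {f f' : ℝ → ℝ}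
    (hf : ∀ t ∈ Set.Ici (0:ℝ), HasDerivAt f (f' t) t)
    (h0 : ∀ t ∈ Set.Ici (0:ℝ), f' t ≤ 0) : AntitoneOn f (Set.Ici 0) := by
  apply antitoneOn_of_deriv_nonpos (convex_Ici 0)
  · exact fun t ht => (hf t ht).continuousAt.continuousWithinAt
  · intro t ht
    rw [interior_Ici] at ht
    exact (hf t (Set.mem_Ici.mpr (le_of_lt ht))).differentiableAt.differentiableWithinAt
  · intro t ht
    rw [interior_Ici] at ht
    rw [(hf t (Set.mem_Ici.mpr (le_of_lt ht))).deriv]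
    exact h0 t (Set.mem_Ici.mpr (le_of_lt ht))

/-- Any positive solution of the tether-radius ODE
`R'(t) = (c_CH/(4μ))·(1/R(t) − 1/R_eq)` with `R_eq = 2π c_CH / F_T` is monotone
(nonincreasing if `R(0) ≥ R_eq`, nondecreasing if `R(0) ≤ R_eq`) and the
cylinder radius tends to the equilibrium radius `R_eq` as `t → ∞`. -/
theorem tether_radius_tendsto_equilibrium
    (μ cCH FT : ℝ) (hμ : 0 < μ) (hc : 0 < cCH) (hF : 0 < FT)
    (Req : ℝ) (hReq : Req = 2 * π * cCH / FT)
    (R : ℝ → ℝ) (hpos : ∀ t ≥ (0 : ℝ), 0 < R t)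
    (hode : ∀ t ≥ (0 : ℝ), HasDerivAt R ((cCH / (4 * μ)) * (1 / R t - 1 / Req)) t) :
    (Req ≤ R 0 → AntitoneOn R (Set.Ici 0)) ∧
      (R 0 ≤ Req → MonotoneOn R (Set.Ici 0)) ∧
      Tendsto R atTop (nhds Req) := by
  set k : ℝ := cCH / (4 * μ) with hk_def
  have hk : 0 < k := by positivity
  have hReq0 : 0 < Req := by
    rw [hReq]; have := Real.pi_pos; positivity
  -- the Lyapunov function V = (R - Req)^2 is nonincreasing
  have hV : AntitoneOn (fun t => (R t - Req) ^ 2) (Set.Ici 0) := by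
    apply antiAux (f' := fun t => (2 : ℕ) * (R t - Req) ^ 1 * (k * (1 / R t - 1 / Req)))
    · intro t ht
      exact ((hode t ht).sub_const Req).pow 2
    · intro t ht
      have hR := hpos t ht
      have key : (2 : ℕ) * (R t - Req) ^ 1 * (k * (1 / R t - 1 / Req))
          = (-(2 * k * (R t - Req) ^ 2)) / (R t * Req) := by
        field_simp
        ring
      rw [key]
      apply div_nonpos_of_nonpos_of_nonneg
      · nlinarith [sq_nonneg (R t - Req)]
      · positivity
  -- sign invariance
  have hinv₁ : Req ≤ R 0 → ∀ t ∈ Set.Ici (0:ℝ), Req ≤ R t := by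
    intro h0 t ht
    by_contra hlt
    push_neg at hlt
    have hcont : ContinuousOn R (Set.Icc 0 t) := fun s hs =>
      (hode s hs.1).continuousAt.continuousWithinAt
    have hmem : Req ∈ Set.Icc (R t) (R 0) := ⟨le_of_lt hlt, h0⟩
    obtain ⟨s, hs, hRs⟩ := intermediate_value_Icc' ht hcont hmem
    have h1 : (R t - Req) ^ 2 ≤ (R s - Req) ^ 2 := hV hs.1 ht hs.2
    rw [hRs, sub_self] at h1
    have : R t = Req := by nlinarith [sq_nonneg (R t - Req)]
    linarith
  have hinv₂ : R 0 ≤ Req → ∀ t ∈ Set.Ici (0:ℝ), R t ≤ Req := by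
    intro h0 t ht
    by_contra hlt
    push_neg at hlt
    have hcont : ContinuousOn R (Set.Icc 0 t) := fun s hs =>
      (hode s hs.1).continuousAt.continuousWithinAt
    have hmem : Req ∈ Set.Icc (R 0) (R t) := ⟨h0, le_of_lt hlt⟩
    obtain ⟨s, hs, hRs⟩ := intermediate_value_Icc ht hcont hmem
    have h1 : (R t - Req) ^ 2 ≤ (R s - Req) ^ 2 := hV hs.1 ht hs.2
    rw [hRs, sub_self] at h1
    have : R t = Req := by nlinarith [sq_nonneg (R t - Req)]
    linarith
  -- monotonicity
  have hA : Req ≤ R 0 → AntitoneOn R (Set.Ici 0) := by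
    intro h0
    apply antiAux (f' := fun t => k * (1 / R t - 1 / Req)) hode
    intro t ht
    have hge := hinv₁ h0 t ht
    have hR := hpos t ht
    have : 1 / R t ≤ 1 / Req := one_div_le_one_div_of_le hReq0 hge
    nlinarith
  have hM : R 0 ≤ Req → MonotoneOn R (Set.Ici 0) := by
    intro h0
    apply monoAux (f' := fun t => k * (1 / R t - 1 / Req)) hode
    intro t ht
    have hle := hinv₂ h0 t ht
    have hR := hpos t ht
    have : 1 / Req ≤ 1 / R t := one_div_le_one_div_of_le hR hle
    nlinarith
  refine ⟨hA, hM, ?_⟩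
  -- convergence
  rw [Metric.tendsto_atTop]
  intro ε hε
  rcases le_total (R 0) Req with hcase | hcase
  · -- nondecreasing case, R t ≤ Req
    have hmono := hM hcase
    set ε' : ℝ := min (ε / 2) (Req / 2) with hε'_def
    have hε'pos : 0 < ε' := lt_min (by linarith) (by linarith)
    have hε'Req : ε' < Req := lt_of_le_of_lt (min_le_right _ _) (by linarith)
    -- there is a time T with R T > Req - ε'
    have hT : ∃ T : ℝ, 0 ≤ T ∧ Req - ε' < R T := by
      by_contra hno
      push_neg at hno
      set δ : ℝ := k * (1 / (Req - ε') - 1 / Req) with hδ_def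
      have hδpos : 0 < δ := by
        have h1 : 1 / Req < 1 / (Req - ε') :=
          one_div_lt_one_div_of_lt (by linarith) (by linarith)
        have : 0 < 1 / (Req - ε') - 1 / Req := by linarith
        positivity
      -- g t = R t - δ t is monotone
      have hg : MonotoneOn (fun t => R t - δ * t) (Set.Ici 0) := by
        apply monoAux (f' := fun t => k * (1 / R t - 1 / Req) - δ)
        · intro t ht
          have h := (hode t ht).sub ((hasDerivAt_id t).const_mul δ); rw [mul_one] at h; exact h
        · intro t ht
          have hR := hpos t ht
          have hle := hno t ht
          have h1 : 1 / (Req - ε') ≤ 1 / R t :=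
            one_div_le_one_div_of_le hR hle
          simp only [hδ_def, sub_nonneg]
          nlinarith
      set T : ℝ := (Req - R 0 + 1) / δ with hT_def
      have hT0 : 0 ≤ T := by
        apply div_nonneg _ (le_of_lt hδpos)
        linarith
      have h1 : R 0 - δ * 0 ≤ R T - δ * T :=
        hg (Set.mem_Ici.mpr (le_refl 0)) hT0 hT0
      have h2 : δ * T = Req - R 0 + 1 := by
        rw [hT_def]; field_simp
      have h3 : R T ≤ Req := hinv₂ hcase T hT0
      nlinarith
    obtain ⟨T, hT0, hTR⟩ := hT
    refine ⟨T, fun t ht => ?_⟩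
    have ht0 : (0:ℝ) ≤ t := le_trans hT0 ht
    have h1 : R T ≤ R t := hmono hT0 ht0 ht
    have h2 : R t ≤ Req := hinv₂ hcase t ht0
    have : |R t - Req| < ε' := by
      rw [abs_lt]; constructor <;> linarith
    calc dist (R t) Req = |R t - Req| := rfl
      _ < ε' := this
      _ ≤ ε / 2 := min_le_left _ _
      _ < ε := by linarith
  · -- nonincreasing case, R t ≥ Req
    have hanti := hA hcase
    set ε' : ℝ := ε / 2 with hε'_def
    have hε'pos : 0 < ε' := by linarith
    have hT : ∃ T : ℝ, 0 ≤ T ∧ R T < Req + ε' := by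
      by_contra hno
      push_neg at hno
      set δ : ℝ := k * (1 / Req - 1 / (Req + ε')) with hδ_def
      have hδpos : 0 < δ := by
        have h1 : 1 / (Req + ε') < 1 / Req :=
          one_div_lt_one_div_of_lt hReq0 (by linarith)
        have : 0 < 1 / Req - 1 / (Req + ε') := by linarith
        positivity
      have hg : AntitoneOn (fun t => R t + δ * t) (Set.Ici 0) := by
        apply antiAux (f' := fun t => k * (1 / R t - 1 / Req) + δ)
        · intro t ht
          have h := (hode t ht).add ((hasDerivAt_id t).const_mul δ); rw [mul_one] at h; exact h
        · intro t ht
          have hR := hpos t ht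
          have hge := hno t ht
          have h1 : 1 / R t ≤ 1 / (Req + ε') :=
            one_div_le_one_div_of_le (by linarith) hge
          simp only [hδ_def]
          nlinarith
      set T : ℝ := (R 0 + 1) / δ with hT_def
      have hT0 : 0 ≤ T := by
        apply div_nonneg _ (le_of_lt hδpos)
        have := hpos 0 (le_refl 0)
        linarith
      have h1 : R T + δ * T ≤ R 0 + δ * 0 :=
        hg (Set.mem_Ici.mpr (le_refl 0)) hT0 hT0
      have h2 : δ * T = R 0 + 1 := by
        rw [hT_def]; field_simp
      have h3 : 0 < R T := hpos T hT0
      nlinarith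
    obtain ⟨T, hT0, hTR⟩ := hT
    refine ⟨T, fun t ht => ?_⟩
    have ht0 : (0:ℝ) ≤ t := le_trans hT0 ht
    have h1 : R t ≤ R T := hanti hT0 ht0 ht
    have h2 : Req ≤ R t := hinv₁ hcase t ht0
    have : |R t - Req| < ε' := by
      rw [abs_lt]; constructor <;> linarith
    calc dist (R t) Req = |R t - Req| := rfl
      _ < ε' := this
      _ < ε := by
        simp only [hε'_def]; linarith
end

section
/- Let μ > 0, c_CH > 0, F_T > 0, R_eq = 2π c_CH / F_T, and let T = 4 μ R_eq² / c_CH be the characteristic relaxation time. Let R : [0,∞) → ℝ be differentiable with R(t) > 0 and R'(t) = (c_CH/(4μ))·(1/R(t) − 1/R_eq) for all t ≥ 0. Then for every rate r with 0 < r < 1/T there exists a constant C ≥ 0 such that |R(t) − R_eq| ≤ C·exp(−r t) for all t ≥ 0. -/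
open Real

/-- Decay lemma: if `R` solves the ODE, stays positive, and is bounded above by `M`
on `[s,∞)` with `r * (M * Req) ≤ k`, then `|R t - Req|` decays at rate `r` from `s`. -/
lemma tether_decay_aux (k Req : ℝ) (hk : 0 < k) (hReqpos : 0 < Req)
    (R : ℝ → ℝ) (hpos : ∀ t ≥ (0 : ℝ), 0 < R t)
    (hode : ∀ t ≥ (0 : ℝ), HasDerivAt R (k * (1 / R t - 1 / Req)) t)
    (s : ℝ) (hs : 0 ≤ s) (M : ℝ) (hMle : ∀ t ≥ s, R t ≤ M)
    (r : ℝ) (hr : 0 < r) (hrM : r * (M * Req) ≤ k) :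
    ∀ t ≥ s, |R t - Req| ≤ |R s - Req| * Real.exp (-r * (t - s)) := by
  intro t ht
  set h : ℝ → ℝ := fun x => Real.exp (2 * r * x) * (R x - Req) ^ 2 with hh
  have hderiv : ∀ x ≥ s, HasDerivAt h
      (Real.exp (2 * r * x) * (2 * r) * (R x - Req) ^ 2
        + Real.exp (2 * r * x) * (2 * (R x - Req) ^ 1 * (k * (1 / R x - 1 / Req)))) x := by
    intro x hx
    have hx0 : (0 : ℝ) ≤ x := le_trans hs hx
    have h1 : HasDerivAt (fun x : ℝ => Real.exp (2 * r * x)) (Real.exp (2 * r * x) * (2 * r)) x := by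
      simpa using (HasDerivAt.exp ((hasDerivAt_id x).const_mul (2 * r)))
    have h2 : HasDerivAt (fun x => (R x - Req) ^ 2)
        (2 * (R x - Req) ^ 1 * (k * (1 / R x - 1 / Req))) x := by
      simpa using ((hode x hx0).sub_const Req).fun_pow 2
    simpa [hh] using h1.fun_mul h2
  have hanti : AntitoneOn h (Set.Ici s) := by
    apply antitoneOn_of_deriv_nonpos (convex_Ici s)
    · exact fun x hx => ((hderiv x hx).continuousAt).continuousWithinAt
    · intro x hx
      rw [interior_Ici] at hx
      exact ((hderiv x (le_of_lt hx)).differentiableAt).differentiableWithinAt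
    · intro x hx
      rw [interior_Ici] at hx
      have hxs : s ≤ x := le_of_lt hx
      have hx0 : (0 : ℝ) ≤ x := le_trans hs hxs
      rw [(hderiv x hxs).deriv]
      have hRx : 0 < R x := hpos x hx0
      have hRxM : R x ≤ M := hMle x hxs
      have hE : 0 < Real.exp (2 * r * x) := Real.exp_pos _
      have hk' : r * (R x * Req) ≤ k := by nlinarith
      have key : r ≤ k / (R x * Req) := (le_div_iff₀ (by positivity)).2 hk'
      have eq1 : Real.exp (2 * r * x) * (2 * r) * (R x - Req) ^ 2
          + Real.exp (2 * r * x) * (2 * (R x - Req) ^ 1 * (k * (1 / R x - 1 / Req)))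
          = 2 * Real.exp (2 * r * x) * (R x - Req) ^ 2 * (r - k / (R x * Req)) := by
        field_simp
        ring
      rw [eq1]
      have h3 : r - k / (R x * Req) ≤ 0 := sub_nonpos.2 key
      have h4 : 0 ≤ 2 * Real.exp (2 * r * x) * (R x - Req) ^ 2 := by positivity
      exact mul_nonpos_of_nonneg_of_nonpos h4 h3
  have hht : h t ≤ h s := hanti (Set.self_mem_Ici) ht ht
  have hRHS : 0 ≤ |R s - Req| * Real.exp (-r * (t - s)) := by positivity
  refine le_of_pow_le_pow_left₀ two_ne_zero hRHS ?_
  rw [sq_abs]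
  have e2 : Real.exp (-r * (t - s)) ^ 2 = Real.exp (2 * r * s) / Real.exp (2 * r * t) := by
    rw [sq, ← Real.exp_add, ← Real.exp_sub]
    congr 1
    ring
  have expand : (|R s - Req| * Real.exp (-r * (t - s))) ^ 2
      = (R s - Req) ^ 2 * Real.exp (2 * r * s) / Real.exp (2 * r * t) := by
    rw [mul_pow, sq_abs, e2]
    ring
  rw [expand, le_div_iff₀ (Real.exp_pos _)]
  calc (R t - Req) ^ 2 * Real.exp (2 * r * t)
      = Real.exp (2 * r * t) * (R t - Req) ^ 2 := by ring
    _ ≤ Real.exp (2 * r * s) * (R s - Req) ^ 2 := hht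
    _ = (R s - Req) ^ 2 * Real.exp (2 * r * s) := by ring

/-- Invariance: the solution stays below `max (R 0) Req`. -/
lemma tether_bound_aux (k Req : ℝ) (hk : 0 < k) (hReqpos : 0 < Req)
    (R : ℝ → ℝ) (hpos : ∀ t ≥ (0 : ℝ), 0 < R t)
    (hode : ∀ t ≥ (0 : ℝ), HasDerivAt R (k * (1 / R t - 1 / Req)) t) :
    ∀ t ≥ (0 : ℝ), R t ≤ max (R 0) Req := by
  intro t ht
  by_contra hcon
  push_neg at hcon
  set B := max (R 0) Req with hB
  have hε : 0 < (R t - B) / 2 := by linarith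
  have := image_le_of_deriv_right_lt_deriv_boundary
    (f := R) (f' := fun x => k * (1 / R x - 1 / Req)) (a := 0) (b := t)
    (fun x hx => ((hode x hx.1).continuousAt).continuousWithinAt)
    (fun x hx => (hode x hx.1).hasDerivWithinAt)
    (B := fun _ => B + (R t - B) / 2) (B' := fun _ => 0)
    (by show R 0 ≤ B + (R t - B) / 2; have := le_max_left (R 0) Req; linarith)
    (fun x => hasDerivAt_const x _)
    (fun x hx hEq => by
      have hx0 : (0 : ℝ) ≤ x := hx.1
      have hRx : Req < R x := by
        have := le_max_right (R 0) Req
        rw [hEq]; linarith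
      have h1 : 1 / R x < 1 / Req := one_div_lt_one_div_of_lt hReqpos hRx
      exact mul_neg_of_pos_of_neg hk (by linarith))
  have := this ⟨ht, le_refl t⟩
  linarith

/-- Exponential convergence of the tether radius towards equilibrium: with
`R_eq = 2π c_CH / F_T` and characteristic relaxation time `T = 4 μ R_eq² / c_CH`,
any positive solution of `R'(t) = (c_CH/(4μ))·(1/R(t) − 1/R_eq)` satisfies, for
every rate `0 < r < 1/T`, a bound `|R(t) − R_eq| ≤ C·exp(−r t)` on `[0,∞)`. -/
theorem tether_radius_exponential_decay
    (μ cCH FT : ℝ) (hμ : 0 < μ) (hc : 0 < cCH) (hF : 0 < FT)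
    (Req : ℝ) (hReq : Req = 2 * π * cCH / FT)
    (T : ℝ) (hT : T = 4 * μ * Req ^ 2 / cCH)
    (R : ℝ → ℝ) (hpos : ∀ t ≥ (0 : ℝ), 0 < R t)
    (hode : ∀ t ≥ (0 : ℝ), HasDerivAt R ((cCH / (4 * μ)) * (1 / R t - 1 / Req)) t) :
    ∀ r : ℝ, 0 < r → r < 1 / T →
      ∃ C : ℝ, 0 ≤ C ∧ ∀ t ≥ (0 : ℝ), |R t - Req| ≤ C * Real.exp (-r * t) := by
  intro r hr hrT
  set k := cCH / (4 * μ) with hk_def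
  have hk : 0 < k := by positivity
  have hReqpos : 0 < Req := by rw [hReq]; positivity
  have hrk : r * Req ^ 2 < k := by
    have hTval : 1 / T = k / Req ^ 2 := by
      rw [hT, hk_def]
      field_simp
    rw [hTval] at hrT
    exact (lt_div_iff₀ (by positivity)).1 hrT
  have hode' : ∀ t ≥ (0 : ℝ), HasDerivAt R (k * (1 / R t - 1 / Req)) t := hode
  -- boundedness
  set B := max (R 0) Req with hB_def
  have hRB : ∀ t ≥ (0 : ℝ), R t ≤ B := tether_bound_aux k Req hk hReqpos R hpos hode'
  have hBReq : Req ≤ B := le_max_right _ _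
  have hBpos : 0 < B := lt_of_lt_of_le hReqpos hBReq
  -- stage 1: slow decay
  set ρ := k / (B * Req) with hρ_def
  have hρ : 0 < ρ := by positivity
  have hρM : ρ * (B * Req) ≤ k := by
    rw [hρ_def]; field_simp; exact le_rfl
  have stage1 : ∀ t ≥ (0 : ℝ), |R t - Req| ≤ |R 0 - Req| * Real.exp (-ρ * (t - 0)) :=
    tether_decay_aux k Req hk hReqpos R hpos hode' 0 le_rfl B
      (fun t ht => hRB t ht) ρ hρ hρM
  set D := |R 0 - Req| with hD_def
  by_cases hD : D = 0
  · refine ⟨0, le_rfl, fun t ht => ?_⟩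
    have := stage1 t ht
    rw [hD] at this
    simpa using this
  · have hDpos : 0 < D := lt_of_le_of_ne (abs_nonneg _) (Ne.symm hD)
    set M := k / (r * Req) with hM_def
    have hMReq : Req < M := by
      rw [hM_def, lt_div_iff₀ (by positivity)]
      nlinarith
    have hrM : r * (M * Req) ≤ k := by
      have : r * (M * Req) = k := by
        rw [hM_def]
        field_simp
      exact this.le
    set t₀ := max 0 (Real.log (D / (M - Req)) / ρ) with ht₀_def
    have ht₀ : (0 : ℝ) ≤ t₀ := le_max_left _ _
    have hkey : D * Real.exp (-(ρ * t₀)) ≤ M - Req := by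
      have hq : 0 < D / (M - Req) := by
        apply div_pos hDpos; linarith
      have hlog : Real.log (D / (M - Req)) ≤ ρ * t₀ := by
        have h1 : Real.log (D / (M - Req)) / ρ ≤ t₀ := le_max_right _ _
        calc Real.log (D / (M - Req)) = Real.log (D / (M - Req)) / ρ * ρ := by
              field_simp
          _ ≤ t₀ * ρ := by
              apply mul_le_mul_of_nonneg_right h1 (le_of_lt hρ)
          _ = ρ * t₀ := by ring
      have h2 : D / (M - Req) ≤ Real.exp (ρ * t₀) := (Real.log_le_iff_le_exp hq).1 hlog
      have h3 : D ≤ (M - Req) * Real.exp (ρ * t₀) := by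
        rw [div_le_iff₀ (by linarith : (0:ℝ) < M - Req)] at h2
        linarith
      rw [Real.exp_neg, ← div_eq_mul_inv, div_le_iff₀ (Real.exp_pos _)]
      linarith
    have hM2 : ∀ t ≥ t₀, R t ≤ M := by
      intro t ht
      have h1 := stage1 t (le_trans ht₀ ht)
      simp only [sub_zero] at h1
      have h2 : Real.exp (-ρ * t) ≤ Real.exp (-(ρ * t₀)) := by
        apply Real.exp_le_exp.2
        nlinarith
      have h3 : R t - Req ≤ |R t - Req| := le_abs_self _
      have h4 : D * Real.exp (-ρ * t) ≤ D * Real.exp (-(ρ * t₀)) :=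
        mul_le_mul_of_nonneg_left h2 (le_of_lt hDpos)
      linarith
    have stage2 : ∀ t ≥ t₀, |R t - Req| ≤ |R t₀ - Req| * Real.exp (-r * (t - t₀)) :=
      tether_decay_aux k Req hk hReqpos R hpos hode' t₀ ht₀ M hM2 r hr hrM
    have hDt₀ : |R t₀ - Req| ≤ D := by
      have h1 := stage1 t₀ ht₀
      simp only [sub_zero] at h1
      have h2 : Real.exp (-ρ * t₀) ≤ 1 := Real.exp_le_one_iff.2 (by nlinarith)
      nlinarith
    refine ⟨D * Real.exp (r * t₀), by positivity, fun t ht => ?_⟩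
    by_cases htt : t₀ ≤ t
    · have h2 := stage2 t htt
      have h3 : |R t₀ - Req| * Real.exp (-r * (t - t₀)) ≤ D * Real.exp (-r * (t - t₀)) :=
        mul_le_mul_of_nonneg_right hDt₀ (le_of_lt (Real.exp_pos _))
      have h4 : D * Real.exp (-r * (t - t₀)) = D * Real.exp (r * t₀) * Real.exp (-r * t) := by
        rw [mul_assoc, ← Real.exp_add]
        ring_nf
      calc |R t - Req| ≤ |R t₀ - Req| * Real.exp (-r * (t - t₀)) := h2
        _ ≤ D * Real.exp (-r * (t - t₀)) := h3
        _ = D * Real.exp (r * t₀) * Real.exp (-r * t) := h4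
    · push_neg at htt
      have h1 := stage1 t ht
      simp only [sub_zero] at h1
      have h2 : Real.exp (-ρ * t) ≤ 1 :=
        Real.exp_le_one_iff.2 (by simpa [neg_mul] using neg_nonpos.2 (mul_nonneg hρ.le ht))
      have h3 : |R t - Req| ≤ D :=
        le_trans h1 (mul_le_of_le_one_right hDpos.le h2)
      have h4 : (1 : ℝ) ≤ Real.exp (r * t₀) * Real.exp (-r * t) := by
        rw [← Real.exp_add]
        apply Real.one_le_exp
        have h5 : r * t ≤ r * t₀ := mul_le_mul_of_nonneg_left htt.le hr.le
        linarith
      calc |R t - Req| ≤ D := h3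
        _ = D * 1 := by ring
        _ ≤ D * (Real.exp (r * t₀) * Real.exp (-r * t)) :=
            mul_le_mul_of_nonneg_left h4 (le_of_lt hDpos)
        _ = D * Real.exp (r * t₀) * Real.exp (-r * t) := by ring
end

section
/- Let μ > 0, c_CH > 0, F_T > 0, R_eq = 2π c_CH / F_T, and let T = 4 μ R_eq² / c_CH be the characteristic relaxation time. Let R : [0,∞) → ℝ be differentiable with R(t) > 0 and R'(t) = (c_CH/(4μ))·(1/R(t) − 1/R_eq) for all t ≥ 0. Then the limit C = lim_{t→∞} exp(t/T)·(R(t) − R_eq) exists and is finite; i.e. the final decay towards equilibrium has the asymptotic behavior R(t) = R_eq + C·exp(−t/T) + o(exp(−t/T)) as t → ∞. -/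
open Real Filter

/-- Asymptotics of the final decay of the tether radius: with
`R_eq = 2π c_CH / F_T` and characteristic relaxation time `T = 4 μ R_eq² / c_CH`,
for any positive solution of `R'(t) = (c_CH/(4μ))·(1/R(t) − 1/R_eq)` the limit
`C = lim_{t→∞} exp(t/T)·(R(t) − R_eq)` exists and is finite, i.e.
`R(t) = R_eq + C·exp(−t/T) + o(exp(−t/T))` as `t → ∞`. -/
theorem tether_radius_asymptotic_decay
    (μ cCH FT : ℝ) (hμ : 0 < μ) (hc : 0 < cCH) (hF : 0 < FT)
    (Req : ℝ) (hReq : Req = 2 * π * cCH / FT)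
    (T : ℝ) (hT : T = 4 * μ * Req ^ 2 / cCH)
    (R : ℝ → ℝ) (hpos : ∀ t ≥ (0 : ℝ), 0 < R t)
    (hode : ∀ t ≥ (0 : ℝ), HasDerivAt R ((cCH / (4 * μ)) * (1 / R t - 1 / Req)) t) :
    ∃ C : ℝ, Tendsto (fun t => Real.exp (t / T) * (R t - Req)) atTop (nhds C) := by
  have hπ : (0:ℝ) < π := Real.pi_pos
  have hReqpos : 0 < Req := by rw [hReq]; positivity
  have hTpos : 0 < T := by rw [hT]; positivity
  set h : ℝ → ℝ := fun s => Real.exp (s / T + R s / Req) * (R s - Req) with hh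
  -- derivative of h is 0 on [0,∞)
  have hder : ∀ s ≥ (0:ℝ), HasDerivAt h 0 s := by
    intro s hs
    have hR := hode s hs
    have h1 : HasDerivAt (fun u => u / T + R u / Req)
        (1 / T + (cCH / (4 * μ)) * (1 / R s - 1 / Req) / Req) s := by
      have := ((hasDerivAt_id s).div_const T).add (hR.div_const Req)
      exact this
    have h2 : HasDerivAt (fun u => R u - Req)
        ((cCH / (4 * μ)) * (1 / R s - 1 / Req)) s := hR.sub_const Req
    have h3 := (h1.exp.mul h2)
    refine h3.congr_deriv ?_
    have hRs : R s ≠ 0 := (hpos s hs).ne'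
    have hReqne : Req ≠ 0 := hReqpos.ne'
    have hμne : μ ≠ 0 := hμ.ne'
    have hcne : cCH ≠ 0 := hc.ne'
    rw [hT]
    field_simp
    ring
  set A := h 0 with hA
  have key : ∀ t ≥ (0:ℝ), h t = A := by
    intro t ht
    have hcont : ContinuousOn h (Set.Icc 0 t) := fun s hs =>
      ((hder s hs.1).continuousAt).continuousWithinAt
    have hd : ∀ s ∈ Set.Ico (0:ℝ) t, HasDerivWithinAt h 0 (Set.Ici s) s := fun s hs =>
      ((hder s hs.1).hasDerivWithinAt)
    exact constant_of_has_deriv_right_zero hcont hd t (Set.mem_Icc.2 ⟨ht, le_refl t⟩)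
  -- explicit formula: R t - Req = A * exp (-(t/T + R t/Req))
  have hform : ∀ t ≥ (0:ℝ), R t - Req = A * Real.exp (-(t / T + R t / Req)) := by
    intro t ht
    have := key t ht
    rw [hh] at this
    have hexp : Real.exp (t / T + R t / Req) ≠ 0 := (Real.exp_pos _).ne'
    rw [Real.exp_neg, eq_comm, mul_comm, inv_mul_eq_div, div_eq_iff hexp]
    linear_combination -this
  -- R tends to Req
  have hRtend : Tendsto R atTop (nhds Req) := by
    have hsub : Tendsto (fun t => R t - Req) atTop (nhds 0) := by
      have hg : Tendsto (fun t : ℝ => |A| * Real.exp (-(t / T))) atTop (nhds 0) := by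
        have h1 : Tendsto (fun t : ℝ => t / T) atTop atTop :=
          tendsto_id.atTop_div_const hTpos
        have h2 : Tendsto (fun t : ℝ => Real.exp (-(t / T))) atTop (nhds 0) :=
          Real.tendsto_exp_atBot.comp (tendsto_neg_atTop_atBot.comp h1)
        simpa using h2.const_mul |A|
      apply squeeze_zero_norm' ?_ hg
      filter_upwards [eventually_ge_atTop (0:ℝ)] with t ht
      rw [hform t ht, Real.norm_eq_abs, abs_mul, Real.abs_exp]
      have : -(t / T + R t / Req) ≤ -(t / T) := by
        have : 0 ≤ R t / Req := le_of_lt (div_pos (hpos t ht) hReqpos)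
        linarith
      exact mul_le_mul_of_nonneg_left (Real.exp_le_exp.2 this) (abs_nonneg A)
    have := hsub.add_const Req
    simpa using this
  -- final limit
  refine ⟨A * Real.exp (-1), ?_⟩
  have hfin : Tendsto (fun t => A * Real.exp (-(R t / Req))) atTop
      (nhds (A * Real.exp (-1))) := by
    have h1 : Tendsto (fun t => -(R t / Req)) atTop (nhds (-1)) := by
      have := (hRtend.div_const Req).neg
      rw [div_self hReqpos.ne'] at this
      exact this
    exact (Real.continuous_exp.continuousAt.tendsto.comp h1).const_mul A
  apply hfin.congr'
  filter_upwards [eventually_ge_atTop (0:ℝ)] with t ht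
  rw [hform t ht, show Real.exp (t / T) * (A * Real.exp (-(t / T + R t / Req)))
      = A * (Real.exp (t / T) * Real.exp (-(t / T + R t / Req))) from by ring,
    ← Real.exp_add]
  ring_nf
end
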